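/- Let α = (9 - 3√5)/4 and let 0 < t ≤ 2α/3. Then f(t) := t/2 + 1 - t(1+t)/(2(1-t)) - (1 - t/(1-t))·√t + t²/(2(2-t)) ≥ α, with equality at t = 2α/3; moreover f is decreasing on (0, 0.4). -/

import Mathlib

/-- The auxiliary function from the lower-bound argument for `a_{3,2}`. -/
noncomputable def auxF (t : ℝ) : ℝ :=
  t / 2 + 1 - t * (1 + t) / (2 * (1 - t)) - (1 - t / (1 - t)) * Real.sqrt t
    + t ^ 2 / (2 * (2 - t))

lemma auxF_hasDerivAt (t : ℝ) (h0 : 0 < t) (h1 : t < 1) :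
    HasDerivAt auxF (1/2 - (1+2*t-t^2)/(2*(1-t)^2) + Real.sqrt t/(1-t)^2
      - (1-2*t)/(2*Real.sqrt t*(1-t)) + t*(4-t)/(2*(2-t)^2)) t := by
  have h1t : (1:ℝ) - t ≠ 0 := by linarith
  have h2t : (2:ℝ) - t ≠ 0 := by linarith
  have hsp : 0 < Real.sqrt t := Real.sqrt_pos.2 h0
  have hst : Real.sqrt t ≠ 0 := ne_of_gt hsp
  have hs2 : Real.sqrt t ^ 2 = t := Real.sq_sqrt h0.le
  have d1 : HasDerivAt (fun x : ℝ => x / 2 + 1) (1/2) t := by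
    simpa using ((hasDerivAt_id' t).div_const 2).add_const 1
  have dden1 : HasDerivAt (fun x : ℝ => 2 * (1 - x)) (-2) t := by
    simpa using ((hasDerivAt_id' t).const_sub 1).const_mul (2:ℝ)
  have dnum1 : HasDerivAt (fun x : ℝ => x * (1 + x)) (1 + 2*t) t := by
    have := (hasDerivAt_id' t).mul ((hasDerivAt_const t (1:ℝ)).add (hasDerivAt_id' t))
    exact this.congr_deriv (by simp only [Pi.add_apply]; ring)
  have d2 : HasDerivAt (fun x : ℝ => x * (1 + x) / (2 * (1 - x)))
      (((1 + 2*t) * (2*(1-t)) - t*(1+t) * (-2)) / (2*(1-t))^2) t := by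
    exact dnum1.div dden1 (by simpa using h1t)
  have dq : HasDerivAt (fun x : ℝ => x / (1 - x)) ((1*(1-t) - t*(0-1))/(1-t)^2) t := by
    exact (hasDerivAt_id' t).div ((hasDerivAt_const t (1:ℝ)).sub (hasDerivAt_id' t)) h1t
  have dq2 : HasDerivAt (fun x : ℝ => 1 - x / (1 - x)) (-((1*(1-t) - t*(0-1))/(1-t)^2)) t := by
    have := (hasDerivAt_const t (1:ℝ)).sub dq
    exact this.congr_deriv (by ring)
  have dsq : HasDerivAt Real.sqrt (1 / (2 * Real.sqrt t)) t := Real.hasDerivAt_sqrt (ne_of_gt h0)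
  have d3 : HasDerivAt (fun x : ℝ => (1 - x / (1 - x)) * Real.sqrt x)
      ((-((1*(1-t) - t*(0-1))/(1-t)^2)) * Real.sqrt t + (1 - t/(1-t)) * (1 / (2 * Real.sqrt t))) t :=
    dq2.mul dsq
  have dnum2 : HasDerivAt (fun x : ℝ => x ^ 2) (2*t) t := by
    simpa using hasDerivAt_pow 2 t
  have dden2 : HasDerivAt (fun x : ℝ => 2 * (2 - x)) (-2) t := by
    simpa using ((hasDerivAt_id' t).const_sub 2).const_mul (2:ℝ)
  have d4 : HasDerivAt (fun x : ℝ => x ^ 2 / (2 * (2 - x)))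
      ((2*t * (2*(2-t)) - t^2 * (-2)) / (2*(2-t))^2) t :=
    dnum2.div dden2 (by simpa using h2t)
  have H := ((d1.sub d2).sub d3).add d4
  have heq : auxF = fun x : ℝ => x / 2 + 1 - x * (1 + x) / (2 * (1 - x))
      - (1 - x / (1 - x)) * Real.sqrt x + x ^ 2 / (2 * (2 - x)) := rfl
  rw [heq]
  refine H.congr_deriv ?_
  field_simp
  ring_nf

lemma key_poly (u : ℝ) (h0 : 0 < u) (h1 : u^2 < 2/5) :
    -4+24*u^2-12*u^3-29*u^4+15*u^5+13*u^6-6*u^7-2*u^8+u^9 < 0 := by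
  nlinarith [sq_nonneg u, sq_nonneg (u-1), sq_nonneg (u^2-2/5), mul_pos h0 h0,
    sq_nonneg (u^3-1), sq_nonneg (u^4), pow_pos h0 3, pow_pos h0 5, pow_pos h0 7,
    sq_nonneg (u^2 - 0.63*u)]

lemma my_deriv_neg (t : ℝ) (h0 : 0 < t) (h4 : t < 0.4) :
    1/2 - (1+2*t-t^2)/(2*(1-t)^2) + Real.sqrt t/(1-t)^2
      - (1-2*t)/(2*Real.sqrt t*(1-t)) + t*(4-t)/(2*(2-t)^2) < 0 := by
  set u := Real.sqrt t with hu
  have hup : 0 < u := Real.sqrt_pos.2 h0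
  have hu2 : u^2 = t := Real.sq_sqrt h0.le
  have hul : u^2 < 2/5 := by rw [hu2]; norm_num at h4 ⊢; linarith
  have h1t : (0:ℝ) < 1 - t := by norm_num at h4; linarith
  have h2t : (0:ℝ) < 2 - t := by linarith
  have hP := key_poly u hup hul
  rw [← hu2] at *
  have hD : 0 < 2*u*(1-u^2)^2*(2-u^2)^2 := by positivity
  have hE : (1/2 - (1+2*u^2-(u^2)^2)/(2*(1-u^2)^2) + u/(1-u^2)^2
      - (1-2*u^2)/(2*u*(1-u^2)) + u^2*(4-u^2)/(2*(2-u^2)^2)) * (2*u*(1-u^2)^2*(2-u^2)^2)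
      = -4+24*u^2-12*u^3-29*u^4+15*u^5+13*u^6-6*u^7-2*u^8+u^9 := by
    field_simp
    ring
  nlinarith [mul_pos hD (show (0:ℝ) < -(1/2 - (1+2*u^2-(u^2)^2)/(2*(1-u^2)^2) + u/(1-u^2)^2
      - (1-2*u^2)/(2*u*(1-u^2)) + u^2*(4-u^2)/(2*(2-u^2)^2)) from by nlinarith [hE, hP, hD])]

lemma sqrt5_bounds : 2.2 < Real.sqrt 5 ∧ Real.sqrt 5 < 2.3 := by
  constructor
  · rw [show (2.2:ℝ) = Real.sqrt (2.2^2) by rw [Real.sqrt_sq]; norm_num]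
    apply Real.sqrt_lt_sqrt <;> norm_num
  · rw [show (2.3:ℝ) = Real.sqrt (2.3^2) by rw [Real.sqrt_sq]; norm_num]
    apply Real.sqrt_lt_sqrt <;> norm_num

lemma auxF_eq : auxF ((3 - Real.sqrt 5)/2) = (9 - 3 * Real.sqrt 5) / 4 := by
  obtain ⟨hl, hr⟩ := sqrt5_bounds
  set s := Real.sqrt 5 with hs
  have hs2 : s^2 = 5 := Real.sq_sqrt (by norm_num)
  have hsqrt : Real.sqrt ((3 - s)/2) = (s-1)/2 := by
    rw [show (3 - s)/2 = ((s-1)/2)^2 by nlinarith]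
    exact Real.sqrt_sq (by nlinarith)
  rw [auxF, hsqrt]
  have h1 : (1:ℝ) - (3-s)/2 ≠ 0 := by intro h; nlinarith
  have h2 : (2:ℝ) - (3-s)/2 ≠ 0 := by intro h; nlinarith
  have h3 : (2:ℝ) - (3 - s) ≠ 0 := by intro h; nlinarith
  have h4 : (2*2:ℝ) - (3 - s) ≠ 0 := by intro h; nlinarith
  have h5 : (2^2:ℝ) - (3 - s) ≠ 0 := by intro h; nlinarith
  field_simp
  nlinarith [hs2, sq_nonneg s, sq_nonneg (s-1), sq_nonneg (s+1)]

lemma auxF_strictAntiOn : StrictAntiOn auxF (Set.Ioo 0 0.4) := by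
  apply strictAntiOn_of_deriv_neg (convex_Ioo (0:ℝ) 0.4)
  · intro x hx
    obtain ⟨hx0, hx4⟩ := hx
    have : (0.4:ℝ) < 1 := by norm_num
    exact ((auxF_hasDerivAt x hx0 (lt_trans hx4 this)).differentiableAt).continuousAt.continuousWithinAt
  · intro x hx
    rw [interior_Ioo] at hx
    obtain ⟨hx0, hx4⟩ := hx
    have h1 : x < 1 := lt_trans hx4 (by norm_num)
    rw [(auxF_hasDerivAt x hx0 h1).deriv]
    exact my_deriv_neg x hx0 hx4

theorem auxF_bound :
    (∀ t : ℝ, 0 < t → t ≤ 2 * ((9 - 3 * Real.sqrt 5) / 4) / 3 →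
      (9 - 3 * Real.sqrt 5) / 4 ≤ auxF t) ∧
    auxF (2 * ((9 - 3 * Real.sqrt 5) / 4) / 3) = (9 - 3 * Real.sqrt 5) / 4 ∧
    StrictAntiOn auxF (Set.Ioo 0 0.4) := by
  obtain ⟨hl, hr⟩ := sqrt5_bounds
  have ht0 : 2 * ((9 - 3 * Real.sqrt 5) / 4) / 3 = (3 - Real.sqrt 5)/2 := by ring
  have ht0mem : (3 - Real.sqrt 5)/2 ∈ Set.Ioo (0:ℝ) 0.4 := by
    constructor
    · norm_num; linarith
    · norm_num; linarith
  refine ⟨?_, by rw [ht0]; exact auxF_eq, auxF_strictAntiOn⟩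
  intro t htp hle
  rw [ht0] at hle
  rcases eq_or_lt_of_le hle with h | h
  · rw [h, auxF_eq]
  · have htmem : t ∈ Set.Ioo (0:ℝ) 0.4 := ⟨htp, lt_trans h ht0mem.2⟩
    have := auxF_strictAntiOn htmem ht0mem h
    rw [auxF_eq] at this
    linarith
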